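/- arXiv:2003.06027 — 2 statements merged into one kernel-verified Lean document; each statement's English description precedes it below -/
import Mathlib

section
/- Let A : ℝ → ℝ^{n×n} be differentiable, F_0,…,F_{N−1} ∈ ℝ^n, U_0 ∈ ℝ^n, and observations U_1^obs,…,U_N^obs ∈ ℝ^n. Define U_{k+1}(θ) = A(θ) U_k(θ) + F_k and J(θ) = (1/2) Σ_{k=1}^N ‖U_k(θ) − U_k^obs‖². Define adjoint variables λ_N = U_N(θ) − U_N^obs and λ_k = A(θ)ᵀ λ_{k+1} + (U_k(θ) − U_k^obs) for k = N−1,…,1. Then J is differentiable and J'(θ) = Σ_{k=1}^N λ_kᵀ A'(θ) U_{k−1}(θ). -/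
open Matrix Finset

theorem adjoint_state_gradient_formula
    (n N : ℕ)
    (A A' : ℝ → Matrix (Fin n) (Fin n) ℝ)
    (hA : ∀ θ i j, HasDerivAt (fun t => A t i j) (A' θ i j) θ)
    (F obs : ℕ → (Fin n → ℝ)) (U0 : Fin n → ℝ)
    (U : ℕ → ℝ → (Fin n → ℝ))
    (h0 : ∀ θ, U 0 θ = U0)
    (hrec : ∀ θ k, k < N → U (k + 1) θ = (A θ).mulVec (U k θ) + F k)
    (θ : ℝ)
    (lam : ℕ → (Fin n → ℝ))
    (hlamN : lam N = U N θ - obs N)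
    (hlam : ∀ k, 1 ≤ k → k < N →
      lam k = (A θ)ᵀ.mulVec (lam (k + 1)) + (U k θ - obs k)) :
    HasDerivAt
      (fun t => (1 / 2 : ℝ) * ∑ k ∈ Finset.Icc 1 N, ∑ i, (U k t i - obs k i) ^ 2)
      (∑ k ∈ Finset.Icc 1 N, (lam k) ⬝ᵥ ((A' θ).mulVec (U (k - 1) θ))) θ := by
  classical
  -- tangent vectors V k = dU_k/dθ at θ
  set V : ℕ → Fin n → ℝ := fun k =>
    Nat.rec (0 : Fin n → ℝ)
      (fun k Vk => (A θ).mulVec Vk + (A' θ).mulVec (U k θ)) k with hVdef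
  have hV0 : V 0 = 0 := rfl
  have hVs : ∀ k, V (k + 1) = (A θ).mulVec (V k) + (A' θ).mulVec (U k θ) :=
    fun k => rfl
  -- differentiability of the states
  have hUd : ∀ k, k ≤ N → ∀ i, HasDerivAt (fun t => U k t i) (V k i) θ := by
    intro k
    induction k with
    | zero =>
      intro _ i
      have h : (fun t => U 0 t i) = fun _ => U0 i := by
        funext t; rw [h0]
      rw [h, hV0]
      exact hasDerivAt_const θ (U0 i)
    | succ k ih =>
      intro hk i
      have hk' : k < N := hk
      have heq : (fun t => U (k + 1) t i)
          = fun t => (∑ j, A t i j * U k t j) + F k i := by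
        funext t
        rw [hrec t k hk']
        simp [Matrix.mulVec, dotProduct]
      rw [heq]
      have hsum : HasDerivAt (fun t => ∑ j, A t i j * U k t j)
          (∑ j, (A' θ i j * U k θ j + A θ i j * V k j)) θ :=
        HasDerivAt.fun_sum fun j _ => (hA θ i j).mul (ih hk'.le j)
      have h2 := hsum.add_const (F k i)
      refine h2.congr_deriv (Eq.symm ?_)
      rw [hVs]
      simp only [Pi.add_apply, Matrix.mulVec, dotProduct]
      rw [add_comm, ← Finset.sum_add_distrib]
  -- derivative of the misfit
  have hderiv : HasDerivAt
      (fun t => (1 / 2 : ℝ) * ∑ k ∈ Finset.Icc 1 N, ∑ i, (U k t i - obs k i) ^ 2)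
      ((1 / 2 : ℝ) * ∑ k ∈ Finset.Icc 1 N, ∑ i,
        (2 * (U k θ i - obs k i) * V k i)) θ := by
    apply HasDerivAt.const_mul
    apply HasDerivAt.fun_sum
    intro k hk
    apply HasDerivAt.fun_sum
    intro i _
    have hkN : k ≤ N := (Finset.mem_Icc.mp hk).2
    have hd := (hUd k hkN i).sub_const (obs k i)
    simpa using hd.fun_pow 2
  have hval1 : (1 / 2 : ℝ) * ∑ k ∈ Finset.Icc 1 N, ∑ i,
        (2 * (U k θ i - obs k i) * V k i)
      = ∑ k ∈ Finset.Icc 1 N, (U k θ - obs k) ⬝ᵥ V k := by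
    rw [Finset.mul_sum]
    refine Finset.sum_congr rfl fun k _ => ?_
    rw [Finset.mul_sum]
    simp only [dotProduct, Pi.sub_apply]
    exact Finset.sum_congr rfl fun i _ => by ring
  -- summation by parts / adjoint identity
  have key : ∀ d m, m + d = N → 1 ≤ m →
      ∑ k ∈ Finset.Icc m N, (U k θ - obs k) ⬝ᵥ V k
        = (∑ k ∈ Finset.Icc m N, lam k ⬝ᵥ ((A' θ).mulVec (U (k - 1) θ)))
          + lam m ⬝ᵥ ((A θ).mulVec (V (m - 1))) := by
    intro d
    induction d with
    | zero =>
      intro m hm h1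
      have hmN : m = N := by omega
      subst hmN
      obtain ⟨p, rfl⟩ : ∃ p, m = p + 1 := ⟨m - 1, by omega⟩
      rw [Finset.Icc_self, Finset.sum_singleton, Finset.sum_singleton, hlamN]
      rw [Nat.add_sub_cancel, hVs p]
      rw [dotProduct_add, add_comm]
    | succ d ih =>
      intro m hm h1
      have hmN : m < N := by omega
      have hins : Finset.Icc m N = insert m (Finset.Icc (m + 1) N) := by
        ext x
        simp only [Finset.mem_Icc, Finset.mem_insert]
        omega
      have hnotmem : m ∉ Finset.Icc (m + 1) N := by simp
      rw [hins, Finset.sum_insert hnotmem, Finset.sum_insert hnotmem]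
      rw [ih (m + 1) (by omega) (by omega)]
      rw [Nat.add_sub_cancel]
      obtain ⟨p, rfl⟩ : ∃ p, m = p + 1 := ⟨m - 1, by omega⟩
      rw [Nat.add_sub_cancel]
      have hlm := hlam (p + 1) h1 hmN
      have hVm := hVs p
      have hswap : lam (p + 1 + 1) ⬝ᵥ ((A θ).mulVec (V (p + 1)))
          = ((A θ)ᵀ.mulVec (lam (p + 1 + 1))) ⬝ᵥ V (p + 1) := by
        rw [Matrix.dotProduct_mulVec, Matrix.mulVec_transpose]
      have hexp : lam (p + 1) ⬝ᵥ ((A' θ).mulVec (U p θ))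
            + lam (p + 1) ⬝ᵥ ((A θ).mulVec (V p))
          = lam (p + 1) ⬝ᵥ V (p + 1) := by
        rw [hVm, dotProduct_add, add_comm]
      have hlhs : lam (p + 1) ⬝ᵥ V (p + 1)
          = (U (p + 1) θ - obs (p + 1)) ⬝ᵥ V (p + 1)
            + lam (p + 1 + 1) ⬝ᵥ ((A θ).mulVec (V (p + 1))) := by
        rw [hswap, hlm, add_dotProduct, add_comm]
      have : (U (p + 1) θ - obs (p + 1)) ⬝ᵥ V (p + 1)
            + lam (p + 1 + 1) ⬝ᵥ ((A θ).mulVec (V (p + 1)))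
          = lam (p + 1) ⬝ᵥ ((A' θ).mulVec (U p θ))
            + lam (p + 1) ⬝ᵥ ((A θ).mulVec (V p)) := by
        rw [hexp, ← hlhs]
      linarith [this]
  have hfinal : ∑ k ∈ Finset.Icc 1 N, (U k θ - obs k) ⬝ᵥ V k
      = ∑ k ∈ Finset.Icc 1 N, lam k ⬝ᵥ ((A' θ).mulVec (U (k - 1) θ)) := by
    rcases Nat.eq_zero_or_pos N with h | h
    · subst h; simp
    · rw [key (N - 1) 1 (by omega) le_rfl]
      simp [hV0]
  rw [hval1, hfinal] at hderiv
  exact hderiv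
end

section
/- Let A : ℝ^p → ℝ^{n×n} be differentiable in a parameter vector θ ∈ ℝ^p, with U_{k+1}(θ) = A(θ) U_k(θ) + F_k, U_0 fixed, and J(θ) = (1/2) Σ_{k=1}^N ‖U_k(θ) − U_k^obs‖². With adjoint variables λ_N = U_N(θ) − U_N^obs, λ_k = A(θ)ᵀ λ_{k+1} + (U_k(θ) − U_k^obs), the partial derivative of J with respect to the i-th component θ_i equals Σ_{k=1}^N λ_kᵀ (∂A/∂θ_i)(θ) U_{k−1}(θ), for each i = 1,…,p. -/
open Matrix Finset

theorem adjoint_state_gradient_formula_vector_parameter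
    (n N p : ℕ)
    (A : (Fin p → ℝ) → Matrix (Fin n) (Fin n) ℝ)
    (A' : (Fin p → ℝ) → Fin p → Matrix (Fin n) (Fin n) ℝ)
    (hA : ∀ θ i a b, HasDerivAt (fun s => A (Function.update θ i s) a b) (A' θ i a b) (θ i))
    (F obs : ℕ → (Fin n → ℝ)) (U0 : Fin n → ℝ)
    (U : ℕ → (Fin p → ℝ) → (Fin n → ℝ))
    (h0 : ∀ θ, U 0 θ = U0)
    (hrec : ∀ θ k, k < N → U (k + 1) θ = (A θ).mulVec (U k θ) + F k)
    (θ : Fin p → ℝ)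
    (lam : ℕ → (Fin n → ℝ))
    (hlamN : lam N = U N θ - obs N)
    (hlam : ∀ k, 1 ≤ k → k < N →
      lam k = (A θ)ᵀ.mulVec (lam (k + 1)) + (U k θ - obs k)) :
    ∀ i : Fin p,
      HasDerivAt
        (fun s => (1 / 2 : ℝ) * ∑ k ∈ Finset.Icc 1 N,
          ∑ j, (U k (Function.update θ i s) j - obs k j) ^ 2)
        (∑ k ∈ Finset.Icc 1 N, (lam k) ⬝ᵥ ((A' θ i).mulVec (U (k - 1) θ))) (θ i) := by
  intro i
  have hupd : Function.update θ i (θ i) = θ := Function.update_eq_self i θ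
  set V : ℕ → Fin n → ℝ := fun k =>
    Nat.rec (0 : Fin n → ℝ)
      (fun m Vm => (A' θ i).mulVec (U m θ) + (A θ).mulVec Vm) k with hVdef
  have hV0 : V 0 = 0 := rfl
  have hVs : ∀ m, V (m + 1) = (A' θ i).mulVec (U m θ) + (A θ).mulVec (V m) := fun m => rfl
  have hV : ∀ k, k ≤ N → ∀ j,
      HasDerivAt (fun s => U k (Function.update θ i s) j) (V k j) (θ i) := by
    intro k
    induction k with
    | zero => intro _ j; simp only [h0]; exact hasDerivAt_const _ _
    | succ m ih =>
      intro hm j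
      have hm' : m < N := lt_of_lt_of_le (Nat.lt_succ_self m) hm
      have ih' := ih (le_of_lt hm')
      have key : ∀ s, U (m + 1) (Function.update θ i s) j
          = (∑ b, A (Function.update θ i s) j b * U m (Function.update θ i s) b) + F m j := by
        intro s
        rw [hrec _ m hm']
        simp [Matrix.mulVec, dotProduct]
      simp only [key]
      have hsum : HasDerivAt
          (fun s => ∑ b, A (Function.update θ i s) j b * U m (Function.update θ i s) b)
          (∑ b, (A' θ i j b * U m θ b + A θ j b * V m b)) (θ i) := by
        apply HasDerivAt.fun_sum
        intro b _
        have := (hA θ i j b).mul (ih' b)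
        rwa [hupd] at this
      have h2 := hsum.add_const (F m j)
      refine h2.congr_deriv ?_
      show _ = V (m + 1) j
      rw [hVs m]
      simp [Matrix.mulVec, dotProduct, Finset.sum_add_distrib]
  have hJ : HasDerivAt
      (fun s => (1 / 2 : ℝ) * ∑ k ∈ Finset.Icc 1 N,
        ∑ j, (U k (Function.update θ i s) j - obs k j) ^ 2)
      ((1 / 2) * ∑ k ∈ Finset.Icc 1 N, ∑ j, (2 * (U k θ j - obs k j) * V k j)) (θ i) := by
    apply HasDerivAt.const_mul
    apply HasDerivAt.fun_sum; intro k hk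
    apply HasDerivAt.fun_sum; intro j _
    have hkN : k ≤ N := (Finset.mem_Icc.mp hk).2
    have := ((hV k hkN j).sub_const (obs k j)).fun_pow 2
    simpa [hupd] using this
  have key : ∀ m, 1 ≤ m → m ≤ N →
      ∑ k ∈ Finset.Icc 1 m, (U k θ - obs k) ⬝ᵥ V k
        = (∑ k ∈ Finset.Icc 1 m, lam k ⬝ᵥ (A' θ i).mulVec (U (k - 1) θ))
          - lam m ⬝ᵥ V m + (U m θ - obs m) ⬝ᵥ V m := by
    intro m hm
    induction m, hm using Nat.le_induction with
    | base =>
      intro _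
      have hV1 : V 1 = (A' θ i).mulVec (U 0 θ) := by
        have := hVs 0
        rw [hV0, Matrix.mulVec_zero, add_zero] at this
        simpa using this
      simp only [Finset.Icc_self, Finset.sum_singleton, hV1]
      ring
    | succ m hm ih =>
      intro hmN
      have hmN' : m ≤ N := le_of_lt hmN
      have hsplit : ∀ (f : ℕ → ℝ), ∑ k ∈ Finset.Icc 1 (m + 1), f k
          = (∑ k ∈ Finset.Icc 1 m, f k) + f (m + 1) := by
        intro f
        exact Finset.sum_Icc_succ_top (by omega) f
      rw [hsplit, hsplit, ih hmN']
      have hstep : lam (m + 1) ⬝ᵥ V (m + 1)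
          - lam (m + 1) ⬝ᵥ (A' θ i).mulVec (U m θ)
          = lam m ⬝ᵥ V m - (U m θ - obs m) ⬝ᵥ V m := by
        have hAV : lam (m + 1) ⬝ᵥ (A θ).mulVec (V m)
            = ((A θ)ᵀ.mulVec (lam (m + 1))) ⬝ᵥ V m := by
          rw [Matrix.dotProduct_mulVec, Matrix.mulVec_transpose]
        rw [hVs m, dotProduct_add, hlam m hm hmN, add_dotProduct, hAV]
        ring
      have hm1 : (m + 1) - 1 = m := by omega
      rw [hm1]
      linarith [hstep]
  have hfinal : (1 / 2 : ℝ) * ∑ k ∈ Finset.Icc 1 N, ∑ j, (2 * (U k θ j - obs k j) * V k j)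
      = ∑ k ∈ Finset.Icc 1 N, (lam k) ⬝ᵥ ((A' θ i).mulVec (U (k - 1) θ)) := by
    have hd : (1 / 2 : ℝ) * ∑ k ∈ Finset.Icc 1 N, ∑ j, (2 * (U k θ j - obs k j) * V k j)
        = ∑ k ∈ Finset.Icc 1 N, (U k θ - obs k) ⬝ᵥ V k := by
      rw [Finset.mul_sum]
      refine Finset.sum_congr rfl fun k _ => ?_
      rw [Finset.mul_sum]
      refine Finset.sum_congr rfl fun j _ => ?_
      simp [dotProduct]
      ring
    rw [hd]
    rcases Nat.eq_zero_or_pos N with hN | hN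
    · simp [hN]
    · rw [key N hN le_rfl, hlamN]
      ring
  rw [← hfinal]
  exact hJ
end
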